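/- The group G = ℤ * ℤ² is not hyperbolic: for every finite generating set S of G that is closed under inversion and does not contain the identity, and for every δ ≥ 0, the word metric d_S on G fails to be δ-hyperbolic, i.e., there exist x, y, z, w ∈ G with (x,y)_w < min{(x,z)_w, (y,z)_w} − δ. -/

import Mathlib

section Defs

variable {G : Type*} [Group G]

/-- Word length with respect to a generating set `S`: the least `n` such that `g`
is a product of `n` elements of `S`. -/
noncomputable def wlen (S : Set G) (g : G) : ℕ :=
  sInf {n | ∃ l : List G, (∀ x ∈ l, x ∈ S) ∧ l.length = n ∧ l.prod = g}

/-- Word metric: `d(g,h) = |h⁻¹ g|`. -/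
noncomputable def wdist (S : Set G) (x y : G) : ℝ := wlen S (y⁻¹ * x)

/-- Gromov product `(x,y)_w = ½ (d(x,w) + d(w,y) − d(x,y))`. -/
noncomputable def gp (S : Set G) (x y w : G) : ℝ :=
  (wdist S x w + wdist S w y - wdist S x y) / 2

/-- The word metric is `δ`-hyperbolic (Gromov's four-point condition). -/
def IsDeltaHyperbolic (S : Set G) (δ : ℝ) : Prop :=
  ∀ x y z w : G, gp S x y w ≥ min (gp S x z w) (gp S y z w) - δ

/-- A group is virtually cyclic if it has a cyclic subgroup of finite index. -/
def VirtuallyCyclic (G : Type*) [Group G] : Prop :=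
  ∃ H : Subgroup G, IsCyclic H ∧ H.FiniteIndex

/-- `GenCon(g)`: the average word length of the conjugates of `g`
by the generators in `S`. -/
noncomputable def genCon (S : Set G) (g : G) : ℝ :=
  (∑ᶠ s ∈ S, (wlen S (s⁻¹ * g * s) : ℝ)) / S.ncard

/-- Conjugation curvature `κ(g) = (|g| − GenCon(g)) / |g|`. -/
noncomputable def kappa (S : Set G) (g : G) : ℝ :=
  ((wlen S g : ℝ) - genCon S g) / (wlen S g)

/-- `k`-spherical conjugation curvature
`κ_k(g) = (|g| − (1/#S_k) Σ_{s ∈ S_k} d(gs,s)) / |g|`; note `d(gs,s) = |s⁻¹ g s|`. -/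
noncomputable def kappaK (S : Set G) (k : ℕ) (g : G) : ℝ :=
  ((wlen S g : ℝ) -
      (∑ᶠ s ∈ {x : G | wlen S x = k}, (wlen S (s⁻¹ * g * s) : ℝ)) /
        ({x : G | wlen S x = k} : Set G).ncard) / (wlen S g)

end Defs

/-- The single relation `aba⁻¹b⁻¹` making the generators `a` (index 1) and `b`
(index 2) commute, in the free group on three generators `t, a, b`. -/
def zz2Rels : Set (FreeGroup (Fin 3)) :=
  {FreeGroup.of 1 * FreeGroup.of 2 * (FreeGroup.of 1)⁻¹ * (FreeGroup.of 2)⁻¹}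

/-- The group `ℤ * ℤ² = ⟨t, a, b ∣ ab = ba⟩`. -/
abbrev ZZ2 := PresentedGroup zz2Rels

namespace ZZ2Gen

/-- The generator `t`. -/
def t : ZZ2 := PresentedGroup.of 0

/-- The generator `a`. -/
def a : ZZ2 := PresentedGroup.of 1

/-- The generator `b`. -/
def b : ZZ2 := PresentedGroup.of 2

end ZZ2Gen

open ZZ2Gen

/-- The generating set `S_neg = {a, a⁻¹, b, b⁻¹, t, t⁻¹}` of `ℤ * ℤ²`. -/
def Sneg : Set ZZ2 := {a, a⁻¹, b, b⁻¹, t, t⁻¹}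

namespace Aux

variable {G : Type*} [Group G] {S : Set G}

/-- every element has a word representation -/
lemma rep_all (hgen : Subgroup.closure S = ⊤) (hinv : ∀ s ∈ S, s⁻¹ ∈ S) (g : G) :
    ∃ l : List G, (∀ x ∈ l, x ∈ S) ∧ l.prod = g := by
  have hg : g ∈ Subgroup.closure S := hgen ▸ Subgroup.mem_top g
  induction hg using Subgroup.closure_induction with
  | mem s hs => exact ⟨[s], by simp [hs]⟩
  | one => exact ⟨[], by simp⟩
  | mul x y hx hy ihx ihy =>
      obtain ⟨l1, h1, p1⟩ := ihx; obtain ⟨l2, h2, p2⟩ := ihy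
      exact ⟨l1 ++ l2, fun x hx => by rcases List.mem_append.1 hx with h|h; exacts [h1 x h, h2 x h],
        by simp [p1, p2]⟩
  | inv x hx ihx =>
      obtain ⟨l, h1, p1⟩ := ihx
      refine ⟨(l.map Inv.inv).reverse, ?_, ?_⟩
      · intro x hx
        simp only [List.mem_reverse, List.mem_map] at hx
        obtain ⟨y, hy, rfl⟩ := hx
        exact hinv y (h1 y hy)
      · rw [List.prod_reverse_noncomm]
        simp [← p1]

lemma wlen_le_list {l : List G} (hl : ∀ x ∈ l, x ∈ S) : wlen S l.prod ≤ l.length :=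
  Nat.sInf_le ⟨l, hl, rfl, rfl⟩

lemma exists_min_list (hgen : Subgroup.closure S = ⊤) (hinv : ∀ s ∈ S, s⁻¹ ∈ S) (g : G) :
    ∃ l : List G, (∀ x ∈ l, x ∈ S) ∧ l.length = wlen S g ∧ l.prod = g := by
  have hne : {n | ∃ l : List G, (∀ x ∈ l, x ∈ S) ∧ l.length = n ∧ l.prod = g}.Nonempty := by
    obtain ⟨l, h1, h2⟩ := rep_all hgen hinv g
    exact ⟨l.length, l, h1, rfl, h2⟩
  exact Nat.sInf_mem hne

lemma wlen_mul_le (hgen : Subgroup.closure S = ⊤) (hinv : ∀ s ∈ S, s⁻¹ ∈ S) (g h : G) :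
    wlen S (g * h) ≤ wlen S g + wlen S h := by
  obtain ⟨l1, m1, len1, p1⟩ := exists_min_list hgen hinv g
  obtain ⟨l2, m2, len2, p2⟩ := exists_min_list hgen hinv h
  have : wlen S ((l1 ++ l2).prod) ≤ (l1 ++ l2).length :=
    wlen_le_list (fun x hx => by rcases List.mem_append.1 hx with h'|h'; exacts [m1 x h', m2 x h'])
  simpa [p1, p2, len1, len2] using this

lemma wlen_inv (hgen : Subgroup.closure S = ⊤) (hinv : ∀ s ∈ S, s⁻¹ ∈ S) (g : G) :
    wlen S g⁻¹ = wlen S g := by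
  have key : ∀ x : G, wlen S x⁻¹ ≤ wlen S x := by
    intro x
    obtain ⟨l, m, len, p⟩ := exists_min_list hgen hinv x
    have : wlen S ((l.map Inv.inv).reverse.prod) ≤ (l.map Inv.inv).reverse.length := by
      apply wlen_le_list
      intro y hy
      simp only [List.mem_reverse, List.mem_map] at hy
      obtain ⟨z, hz, rfl⟩ := hy
      exact hinv z (m z hz)
    rw [List.prod_reverse_noncomm] at this
    simp only [List.map_map, Function.comp_def, inv_inv, List.map_id', List.length_reverse,
      List.length_map] at this
    rw [p] at this
    simpa [len] using this
  exact le_antisymm (key g) (by simpa using key g⁻¹)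

/-- lower bound via an additive character -/
lemma wlen_hom_bound (hgen : Subgroup.closure S = ⊤) (hinv : ∀ s ∈ S, s⁻¹ ∈ S)
    (φ : G →* Multiplicative ℝ) (C : ℝ) (hC : ∀ s ∈ S, |Multiplicative.toAdd (φ s)| ≤ C)
    (g : G) : |Multiplicative.toAdd (φ g)| ≤ C * wlen S g := by
  obtain ⟨l, m, len, p⟩ := exists_min_list hgen hinv g
  have : |Multiplicative.toAdd (φ l.prod)| ≤ C * l.length := by
    clear p len
    induction l with
    | nil => simp
    | cons x xs ih =>
        have hx := hC x (m x List.mem_cons_self)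
        have ih' := ih (fun y hy => m y (List.mem_cons_of_mem x hy))
        simp only [List.prod_cons, map_mul, List.length_cons] at *
        calc |Multiplicative.toAdd (φ x * φ xs.prod)|
            = |Multiplicative.toAdd (φ x) + Multiplicative.toAdd (φ xs.prod)| := by rfl
          _ ≤ |Multiplicative.toAdd (φ x)| + |Multiplicative.toAdd (φ xs.prod)| := abs_add_le _ _
          _ ≤ C + C * xs.length := add_le_add hx ih'
          _ = C * ((xs.length : ℕ) + 1 : ℕ) := by push_cast; ring
  rw [p, len] at this
  exact this

end Aux



open ZZ2Gen

namespace Aux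

lemma comm_ab : Commute a b := by
  have h : (PresentedGroup.mk zz2Rels)
      (FreeGroup.of 1 * FreeGroup.of 2 * (FreeGroup.of 1)⁻¹ * (FreeGroup.of 2)⁻¹) = 1 := by
    have hmem : (FreeGroup.of 1 * FreeGroup.of 2 * (FreeGroup.of 1)⁻¹ * (FreeGroup.of 2)⁻¹ :
        FreeGroup (Fin 3)) ∈ Subgroup.normalClosure zz2Rels :=
      Subgroup.subset_normalClosure rfl
    exact (QuotientGroup.eq_one_iff _).2 hmem
  have h1 : a * b * a⁻¹ * b⁻¹ = 1 := by
    simpa [a, b, PresentedGroup.of, map_mul, map_inv] using h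
  have h2 : a * b = b * a :=
    calc a * b = (a * b * a⁻¹ * b⁻¹) * (b * a) := by group
      _ = b * a := by rw [h1, one_mul]
  exact h2

/-- the embedding of ℤ² -/
noncomputable def e (p : ℤ × ℤ) : ZZ2 := a ^ p.1 * b ^ p.2

lemma e_add (p q : ℤ × ℤ) : e (p + q) = e p * e q := by
  have hc : Commute (a ^ q.1) (b ^ p.2) := (comm_ab.zpow_zpow q.1 p.2)
  simp only [e, Prod.fst_add, Prod.snd_add, zpow_add]
  calc a ^ p.1 * a ^ q.1 * (b ^ p.2 * b ^ q.2)
      = a ^ p.1 * (a ^ q.1 * b ^ p.2) * b ^ q.2 := by group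
    _ = a ^ p.1 * (b ^ p.2 * a ^ q.1) * b ^ q.2 := by rw [hc.eq]
    _ = a ^ p.1 * b ^ p.2 * (a ^ q.1 * b ^ q.2) := by group

lemma e_zero : e 0 = 1 := by simp [e]

lemma e_neg (p : ℤ × ℤ) : e (-p) = (e p)⁻¹ := by
  have h := e_add (-p) p
  rw [neg_add_cancel, e_zero] at h
  exact eq_inv_of_mul_eq_one_left (by rw [← h])

lemma e_nsmul (n : ℕ) (p : ℤ × ℤ) : e (n • p) = e p ^ n := by
  induction n with
  | zero => simp [e_zero]
  | succ k ih => rw [succ_nsmul, e_add, ih, pow_succ]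

/-- character: a ↦ x, b ↦ y, t ↦ 0 -/
noncomputable def chi (x y : ℝ) : ZZ2 →* Multiplicative ℝ :=
  PresentedGroup.toGroup (f := fun i : Fin 3 =>
    Multiplicative.ofAdd (if i = 1 then x else if i = 2 then y else 0))
    (by
      intro r hr
      rw [zz2Rels, Set.mem_singleton_iff] at hr
      subst hr
      simp only [map_mul, map_inv, FreeGroup.lift_apply_of]
      have key : ∀ u v : Multiplicative ℝ, u * v * u⁻¹ * v⁻¹ = 1 := fun u v => by
        rw [mul_comm u v]; group
      exact key _ _)

lemma chi_a (x y : ℝ) : chi x y a = Multiplicative.ofAdd x := by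
  simp [chi, a, PresentedGroup.toGroup.of]

lemma chi_b (x y : ℝ) : chi x y b = Multiplicative.ofAdd y := by
  simp [chi, b, PresentedGroup.toGroup.of]

lemma chi_e (x y : ℝ) (p : ℤ × ℤ) :
    Multiplicative.toAdd (chi x y (e p)) = p.1 * x + p.2 * y := by
  simp [e, map_mul, map_zpow, chi_a, chi_b, toAdd_mul, toAdd_zpow, smul_eq_mul]

end Aux

namespace Aux

lemma wlen_one {G : Type*} [Group G] {S : Set G} : wlen S (1 : G) = 0 :=
  Nat.eq_zero_of_le_zero (Nat.sInf_le ⟨[], by simp, rfl, rfl⟩)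

lemma wlen_pow_le {G : Type*} [Group G] {S : Set G} (hgen : Subgroup.closure S = ⊤)
    (hinv : ∀ s ∈ S, s⁻¹ ∈ S) (g : G) (n : ℕ) : wlen S (g ^ n) ≤ n * wlen S g := by
  induction n with
  | zero => simp [wlen_one]
  | succ k ih =>
      calc wlen S (g ^ (k+1)) = wlen S (g ^ k * g) := by rw [pow_succ]
        _ ≤ wlen S (g ^ k) + wlen S g := wlen_mul_le hgen hinv _ _
        _ ≤ k * wlen S g + wlen S g := by omega
        _ = (k+1) * wlen S g := by ring

section Tau

variable (S : Set ZZ2)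

/-- stable translation length of `e p` -/
noncomputable def tau (p : ℤ × ℤ) : ℝ :=
  sInf {x : ℝ | ∃ n : ℕ, 0 < n ∧ x = (wlen S (e (n • p)) : ℝ) / n}

variable {S}
variable (hgen : Subgroup.closure S = ⊤) (hinv : ∀ s ∈ S, s⁻¹ ∈ S)

lemma tauSet_nonempty (p : ℤ × ℤ) :
    {x : ℝ | ∃ n : ℕ, 0 < n ∧ x = (wlen S (e (n • p)) : ℝ) / n}.Nonempty :=
  ⟨_, 1, one_pos, rfl⟩

lemma tauSet_bddBelow (p : ℤ × ℤ) :
    BddBelow {x : ℝ | ∃ n : ℕ, 0 < n ∧ x = (wlen S (e (n • p)) : ℝ) / n} := by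
  refine ⟨0, fun x hx => ?_⟩
  obtain ⟨n, hn, rfl⟩ := hx
  positivity

lemma tau_nonneg (p : ℤ × ℤ) : 0 ≤ tau S p := by
  apply le_csInf (tauSet_nonempty p)
  rintro x ⟨n, hn, rfl⟩
  positivity

lemma tau_le (p : ℤ × ℤ) {n : ℕ} (hn : 0 < n) :
    tau S p ≤ (wlen S (e (n • p)) : ℝ) / n :=
  csInf_le (tauSet_bddBelow p) ⟨n, hn, rfl⟩

lemma le_wlen (p : ℤ × ℤ) {n : ℕ} (hn : 0 < n) :
    (n : ℝ) * tau S p ≤ (wlen S (e (n • p)) : ℝ) := by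
  have := tau_le (S := S) p hn
  have hn' : (0:ℝ) < n := by exact_mod_cast hn
  calc (n:ℝ) * tau S p ≤ (n:ℝ) * ((wlen S (e (n • p)) : ℝ) / n) := by
        exact mul_le_mul_of_nonneg_left this (le_of_lt hn')
    _ = wlen S (e (n • p)) := by field_simp

lemma tau_near (p : ℤ × ℤ) {ε : ℝ} (hε : 0 < ε) :
    ∃ m : ℕ, 0 < m ∧ (wlen S (e (m • p)) : ℝ) ≤ m * (tau S p + ε) := by
  have h : tau S p < tau S p + ε := lt_add_of_pos_right _ hε
  obtain ⟨x, hx, hlt⟩ := exists_lt_of_csInf_lt (tauSet_nonempty p) h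
  obtain ⟨m, hm, rfl⟩ := hx
  refine ⟨m, hm, ?_⟩
  have hm' : (0:ℝ) < m := by exact_mod_cast hm
  calc (wlen S (e (m • p)) : ℝ) = m * ((wlen S (e (m • p)) : ℝ) / m) := by field_simp
    _ ≤ m * (tau S p + ε) := mul_le_mul_of_nonneg_left (le_of_lt hlt) (le_of_lt hm')

lemma tau_double (p : ℤ × ℤ) : 2 * tau S p ≤ tau S (p + p) := by
  apply le_csInf (tauSet_nonempty (p + p))
  rintro x ⟨n, hn, rfl⟩
  have h2 : n • (p + p) = (2 * n) • p := by
    rw [smul_add, two_mul, add_smul]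
  rw [h2]
  have := le_wlen (S := S) p (n := 2 * n) (by omega)
  have hn' : (0:ℝ) < n := by exact_mod_cast hn
  rw [le_div_iff₀ hn']
  calc 2 * tau S p * n = ((2*n : ℕ) : ℝ) * tau S p := by push_cast; ring
    _ ≤ _ := this

end Tau

/-- determinant of a pair of integer vectors -/
def Det (p q : ℤ × ℤ) : ℤ := p.1 * q.2 - p.2 * q.1

lemma ne_zero_of_det {p q : ℤ × ℤ} (h : Det p q ≠ 0) : p ≠ 0 ∧ q ≠ 0 := by
  constructor
  · rintro rfl; exact h (by simp [Det])
  · rintro rfl; exact h (by simp [Det])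

section Lower

variable {S : Set ZZ2} (hfin : S.Finite)

/-- sum of character values over the generators -/
noncomputable def CC (x y : ℝ) : ℝ :=
  ∑ s ∈ hfin.toFinset, |Multiplicative.toAdd (chi x y s)|

lemma CC_nonneg (x y : ℝ) : 0 ≤ CC hfin x y :=
  Finset.sum_nonneg fun _ _ => abs_nonneg _

lemma chi_le_CC (x y : ℝ) : ∀ s ∈ S, |Multiplicative.toAdd (chi x y s)| ≤ CC hfin x y :=
  fun s hs => Finset.single_le_sum (f := fun s => |Multiplicative.toAdd (chi x y s)|)
    (fun i _ => abs_nonneg _) (hfin.mem_toFinset.2 hs)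

/-- the uniform lower bound for τ on nonzero vectors -/
noncomputable def cc : ℝ := 1 / (CC hfin 1 0 + CC hfin 0 1 + 1)

lemma DD_pos : 0 < CC hfin 1 0 + CC hfin 0 1 + 1 := by
  have := CC_nonneg hfin 1 0; have := CC_nonneg hfin 0 1; linarith

lemma cc_pos : 0 < cc hfin := by
  rw [cc]; exact one_div_pos.mpr (DD_pos hfin)

variable (hgen : Subgroup.closure S = ⊤) (hinv : ∀ s ∈ S, s⁻¹ ∈ S)

include hgen hinv in
lemma tau_lower {p : ℤ × ℤ} (hp : p ≠ 0) : cc hfin ≤ tau S p := by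
  set D := CC hfin 1 0 + CC hfin 0 1 + 1 with hD
  have hDpos : 0 < D := DD_pos hfin
  apply le_csInf (tauSet_nonempty p)
  rintro x ⟨n, hn, rfl⟩
  have hn' : (0:ℝ) < n := by exact_mod_cast hn
  rw [cc, div_le_div_iff₀ hDpos hn']
  -- suffices: n ≤ D * wlen
  have key : (n : ℝ) ≤ D * (wlen S (e (n • p)) : ℝ) := by
    have h1 := wlen_hom_bound hgen hinv (chi 1 0) (CC hfin 1 0) (chi_le_CC hfin 1 0) (e (n • p))
    have h2 := wlen_hom_bound hgen hinv (chi 0 1) (CC hfin 0 1) (chi_le_CC hfin 0 1) (e (n • p))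
    rw [chi_e] at h1 h2
    have hs1 : ((n • p).1 : ℝ) = (n : ℝ) * (p.1 : ℝ) := by
      rw [Prod.smul_fst, nsmul_eq_mul]; push_cast; ring
    have hs2 : ((n • p).2 : ℝ) = (n : ℝ) * (p.2 : ℝ) := by
      rw [Prod.smul_snd, nsmul_eq_mul]; push_cast; ring
    have hw : (0:ℝ) ≤ (wlen S (e (n • p)) : ℝ) := Nat.cast_nonneg _
    have hmono1 : CC hfin 1 0 * (wlen S (e (n • p)) : ℝ) ≤ D * (wlen S (e (n • p)) : ℝ) := by
      apply mul_le_mul_of_nonneg_right _ hw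
      have := CC_nonneg hfin 0 1; rw [hD]; linarith
    have hmono2 : CC hfin 0 1 * (wlen S (e (n • p)) : ℝ) ≤ D * (wlen S (e (n • p)) : ℝ) := by
      apply mul_le_mul_of_nonneg_right _ hw
      have := CC_nonneg hfin 1 0; rw [hD]; linarith
    have hcase : p.1 ≠ 0 ∨ p.2 ≠ 0 := by
      by_contra hcon; push_neg at hcon
      exact hp (Prod.ext hcon.1 hcon.2)
    rcases hcase with h | h
    · have h1' : |(n:ℝ) * (p.1:ℝ)| ≤ CC hfin 1 0 * (wlen S (e (n • p)) : ℝ) := by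
        simpa [hs1] using h1
      have : (n:ℝ) ≤ |(n:ℝ) * (p.1:ℝ)| := by
        rw [abs_mul, abs_of_pos hn']
        have : (1:ℝ) ≤ |(p.1:ℝ)| := by
          rw [← Int.cast_abs]; exact_mod_cast Int.one_le_abs (by exact_mod_cast h)
        nlinarith
      linarith
    · have h2' : |(n:ℝ) * (p.2:ℝ)| ≤ CC hfin 0 1 * (wlen S (e (n • p)) : ℝ) := by
        simpa [hs2] using h2
      have : (n:ℝ) ≤ |(n:ℝ) * (p.2:ℝ)| := by
        rw [abs_mul, abs_of_pos hn']
        have : (1:ℝ) ≤ |(p.2:ℝ)| := by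
          rw [← Int.cast_abs]; exact_mod_cast Int.one_le_abs (by exact_mod_cast h)
        nlinarith
      linarith
  calc 1 * (n:ℝ) = (n:ℝ) := one_mul _
    _ ≤ D * (wlen S (e (n • p)) : ℝ) := key
    _ = (wlen S (e (n • p)) : ℝ) * D := mul_comm _ _

include hfin hgen hinv in
lemma exists_good : ∃ p q : ℤ × ℤ, Det p q ≠ 0 ∧
    2 * max (tau S p) (tau S q) < tau S (p + q) + tau S (p - q) := by
  by_contra Hc
  push_neg at Hc
  have step : ∀ x y : ℤ × ℤ, Det x y ≠ 0 → ∃ z w : ℤ × ℤ, Det z w ≠ 0 ∧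
      tau S z + tau S w ≤ tau S x + tau S y - cc hfin := by
    intro x y hxy
    obtain ⟨hx0, hy0⟩ := ne_zero_of_det hxy
    have ha : cc hfin ≤ tau S x := tau_lower hfin hgen hinv hx0
    have hb : cc hfin ≤ tau S y := tau_lower hfin hgen hinv hy0
    have h1 : tau S (x + y) + tau S (x - y) ≤ 2 * max (tau S x) (tau S y) := Hc x y hxy
    have hd2 : Det (x + y) (x - y) ≠ 0 := by
      have he : Det (x + y) (x - y) = -2 * Det x y := by
        simp only [Det, Prod.fst_add, Prod.snd_add, Prod.fst_sub, Prod.snd_sub]; ring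
      rw [he]; simpa using hxy
    have h2 := Hc (x + y) (x - y) hd2
    have e1 : (x + y) + (x - y) = x + x := by ring
    have e2 : (x + y) - (x - y) = y + y := by ring
    rw [e1, e2] at h2
    have h3 : 2 * tau S x ≤ tau S (x + x) := tau_double x
    have h4 : 2 * tau S y ≤ tau S (y + y) := tau_double y
    have hmaxAB : tau S x + tau S y ≤ max (tau S (x + y)) (tau S (x - y)) := by
      have := max_le_iff.mp (le_refl (max (tau S (x+x)) (tau S (y+y))))
      have hle : tau S (x+x) + tau S (y+y) ≤ 2 * max (tau S (x + y)) (tau S (x - y)) := h2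
      linarith
    have hAB : max (tau S (x + y)) (tau S (x - y)) + min (tau S (x + y)) (tau S (x - y))
        = tau S (x + y) + tau S (x - y) := max_add_min _ _
    have hab : max (tau S x) (tau S y) + min (tau S x) (tau S y) = tau S x + tau S y :=
      max_add_min _ _
    have hminAB : min (tau S (x + y)) (tau S (x - y))
        ≤ max (tau S x) (tau S y) - min (tau S x) (tau S y) := by linarith
    have hminab : cc hfin ≤ min (tau S x) (tau S y) := le_min ha hb
    rcases le_total (tau S x) (tau S y) with hxy' | hxy' <;>
      rcases le_total (tau S (x + y)) (tau S (x - y))  with hAB' | hAB'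
    · refine ⟨x, x + y, ?_, ?_⟩
      · have : Det x (x + y) = Det x y := by
          simp only [Det, Prod.fst_add, Prod.snd_add]; ring
        rw [this]; exact hxy
      · have h5 := min_eq_left hAB'
        have h6 := max_eq_right hxy'
        have h7 := min_eq_left hxy'
        rw [h5] at hminAB; rw [h6, h7] at hab
        linarith
    · refine ⟨x, x - y, ?_, ?_⟩
      · have : Det x (x - y) = -Det x y := by
          simp only [Det, Prod.fst_sub, Prod.snd_sub]; ring
        rw [this]; simpa using hxy
      · have h5 := min_eq_right hAB'
        have h6 := max_eq_right hxy'
        have h7 := min_eq_left hxy'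
        rw [h5] at hminAB; rw [h6, h7] at hab
        linarith
    · refine ⟨y, x + y, ?_, ?_⟩
      · have : Det y (x + y) = -Det x y := by
          simp only [Det, Prod.fst_add, Prod.snd_add]; ring
        rw [this]; simpa using hxy
      · have h5 := min_eq_left hAB'
        have h6 := max_eq_left hxy'
        have h7 := min_eq_right hxy'
        rw [h5] at hminAB; rw [h6, h7] at hab
        linarith
    · refine ⟨y, x - y, ?_, ?_⟩
      · have : Det y (x - y) = -Det x y := by
          simp only [Det, Prod.fst_sub, Prod.snd_sub]; ring
        rw [this]; simpa using hxy
      · have h5 := min_eq_right hAB'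
        have h6 := max_eq_left hxy'
        have h7 := min_eq_right hxy'
        rw [h5] at hminAB; rw [h6, h7] at hab
        linarith
  have descent : ∀ k : ℕ, ∃ x y : ℤ × ℤ, Det x y ≠ 0 ∧
      tau S x + tau S y ≤ (tau S (1,0) + tau S (0,1)) - k * cc hfin := by
    intro k
    induction k with
    | zero => exact ⟨(1,0), (0,1), by simp [Det], by simp⟩
    | succ n ih =>
        obtain ⟨x, y, hxy, hsum⟩ := ih
        obtain ⟨z, w, hzw, hs2⟩ := step x y hxy
        refine ⟨z, w, hzw, ?_⟩
        push_cast
        linarith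
  obtain ⟨k, hk⟩ := exists_nat_gt ((tau S (1,0) + tau S (0,1)) / cc hfin)
  have hccpos := cc_pos hfin
  have hk' : tau S (1,0) + tau S (0,1) < k * cc hfin := by
    rw [div_lt_iff₀ hccpos] at hk; linarith
  obtain ⟨x, y, hxy, hsum⟩ := descent k
  have := tau_nonneg (S := S) x
  have := tau_nonneg (S := S) y
  linarith

end Lower

end Aux


open ZZ2Gen Aux in
/-- `ℤ * ℤ²` is not hyperbolic: for every finite generating set `S` (closed under
inversion, not containing the identity) and every `δ ≥ 0`, the word metric fails
Gromov's four-point condition for `δ`. -/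
theorem zz2_not_hyperbolic (S : Set ZZ2)
    (hfin : S.Finite) (hgen : Subgroup.closure S = ⊤)
    (hinv : ∀ s ∈ S, s⁻¹ ∈ S) (hone : (1 : ZZ2) ∉ S)
    (δ : ℝ) (hδ : 0 ≤ δ) :
    ∃ x y z w : ZZ2, gp S x y w < min (gp S x z w) (gp S y z w) - δ := by
  obtain ⟨p, q, hdet, hgap⟩ := exists_good hfin hgen hinv
  set α := tau S p with hα
  set β := tau S q with hβ
  set A := tau S (p + q) with hA
  set B := tau S (p - q) with hB
  set M := max α β with hM
  set ρ := A + B - 2 * M with hρ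
  have hρpos : 0 < ρ := by rw [hρ]; linarith [hgap]
  have hε : 0 < ρ / 4 := by linarith
  obtain ⟨m₁, hm₁pos, hm₁⟩ := tau_near (S := S) p hε
  obtain ⟨m₂, hm₂pos, hm₂⟩ := tau_near (S := S) q hε
  -- choose the scale
  obtain ⟨k, hk⟩ := exists_nat_gt (max ((4 * δ) / ((m₁ * m₂ : ℕ) * ρ)) 0)
  have hkpos : 0 < k := by
    rcases Nat.eq_zero_or_pos k with rfl | h
    · exfalso; have := lt_of_le_of_lt (le_max_right _ _) hk; norm_num at this
    · exact h
  set N : ℕ := k * (m₁ * m₂) with hN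
  have hNpos : 0 < N := by positivity
  have hNR : (0:ℝ) < N := by exact_mod_cast hNpos
  -- the four points
  set v1 : ℤ × ℤ := N • p with hv1
  set v2 : ℤ × ℤ := N • q with hv2
  refine ⟨e v1, e v2, e (v1 + v2), 1, ?_⟩
  set W1 := wlen S (e v1) with hW1
  set W2 := wlen S (e v2) with hW2
  set WA := wlen S (e (N • (p + q))) with hWA
  set WB := wlen S (e (N • (p - q))) with hWB
  -- identities among the group elements
  have key_neg : ∀ u : ℤ × ℤ, wlen S ((e u)⁻¹) = wlen S (e u) := fun u =>
    wlen_inv hgen hinv _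
  have hxy : (e v2)⁻¹ * e v1 = e (N • (p - q)) := by
    rw [← e_neg, ← e_add]; congr 1
    rw [hv1, hv2, smul_sub]; abel
  have hxz : (e (v1 + v2))⁻¹ * e v1 = (e v2)⁻¹ := by
    rw [← e_neg, ← e_add, ← e_neg]; congr 1; abel
  have hyz : (e (v1 + v2))⁻¹ * e v2 = (e v1)⁻¹ := by
    rw [← e_neg, ← e_add, ← e_neg]; congr 1; abel
  have hz : v1 + v2 = N • (p + q) := by rw [hv1, hv2, smul_add]
  -- the three Gromov products
  have g1 : gp S (e v1) (e v2) 1 = ((W1:ℝ) + (W2:ℝ) - (WB:ℝ)) / 2 := by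
    simp only [gp, wdist, inv_one, one_mul, mul_one]
    rw [hxy, key_neg v2]
  have g2 : gp S (e v1) (e (v1 + v2)) 1 = ((W1:ℝ) + (WA:ℝ) - (W2:ℝ)) / 2 := by
    simp only [gp, wdist, inv_one, one_mul, mul_one]
    rw [hxz, key_neg v2, key_neg (v1 + v2), hz]
  have g3 : gp S (e v2) (e (v1 + v2)) 1 = ((W2:ℝ) + (WA:ℝ) - (W1:ℝ)) / 2 := by
    simp only [gp, wdist, inv_one, one_mul, mul_one]
    rw [hyz, key_neg v1, key_neg (v1 + v2), hz]
  -- lower bounds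
  have f3 : (N:ℝ) * A ≤ (WA:ℝ) := le_wlen (p + q) hNpos
  have f4 : (N:ℝ) * B ≤ (WB:ℝ) := le_wlen (p - q) hNpos
  -- upper bounds
  have hub : ∀ (r : ℤ × ℤ) (m c : ℕ), 0 < m → 0 < c →
      (wlen S (e (m • r)) : ℝ) ≤ m * (tau S r + ρ/4) →
      (wlen S (e ((c * m) • r)) : ℝ) ≤ (c * m : ℕ) * (tau S r + ρ/4) := by
    intro r m c hm hc hrm
    have h1 : e ((c * m) • r) = (e (m • r)) ^ c := by
      rw [mul_smul, e_nsmul]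
    rw [h1]
    calc (wlen S ((e (m • r)) ^ c) : ℝ) ≤ ((c * wlen S (e (m • r)) : ℕ) : ℝ) := by
          exact_mod_cast wlen_pow_le hgen hinv _ _
      _ = (c:ℝ) * (wlen S (e (m • r)) : ℝ) := by push_cast; ring
      _ ≤ (c:ℝ) * ((m:ℝ) * (tau S r + ρ/4)) := by
          apply mul_le_mul_of_nonneg_left hrm (by positivity)
      _ = ((c * m : ℕ) : ℝ) * (tau S r + ρ/4) := by push_cast; ring
  have f1 : (W1:ℝ) ≤ (N:ℝ) * (α + ρ/4) := by
    have := hub p m₁ (k * m₂) hm₁pos (by positivity) hm₁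
    have hNe : k * m₂ * m₁ = N := by rw [hN]; ring
    rw [hNe] at this
    simpa [hW1, hv1, hα] using this
  have f2 : (W2:ℝ) ≤ (N:ℝ) * (β + ρ/4) := by
    have := hub q m₂ (k * m₁) hm₂pos (by positivity) hm₂
    have hNe : k * m₁ * m₂ = N := by rw [hN]; ring
    rw [hNe] at this
    simpa [hW2, hv2, hβ] using this
  -- products with the scale
  have fα : (N:ℝ) * α ≤ (N:ℝ) * M := by
    apply mul_le_mul_of_nonneg_left (le_max_left _ _) (le_of_lt hNR)
  have fβ : (N:ℝ) * β ≤ (N:ℝ) * M := by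
    apply mul_le_mul_of_nonneg_left (le_max_right _ _) (le_of_lt hNR)
  have fsum : (N:ℝ) * A + (N:ℝ) * B = 2 * ((N:ℝ) * M) + (N:ℝ) * ρ := by
    rw [hρ]; ring
  have fδ : 4 * δ < (N:ℝ) * ρ := by
    have h1 : (4 * δ) / ((m₁ * m₂ : ℕ) * ρ) < k := lt_of_le_of_lt (le_max_left _ _) hk
    have hmm : (0:ℝ) < ((m₁ * m₂ : ℕ) : ℝ) := by
      have : 0 < m₁ * m₂ := by positivity
      exact_mod_cast this
    have h2 : (0:ℝ) < ((m₁ * m₂ : ℕ) : ℝ) * ρ := by positivity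
    rw [div_lt_iff₀ h2] at h1
    calc 4 * δ < (k:ℝ) * (((m₁ * m₂ : ℕ) : ℝ) * ρ) := h1
      _ = (N:ℝ) * ρ := by rw [hN]; push_cast; ring
  have fε1 : (N:ℝ) * (α + ρ/4) = (N:ℝ) * α + ((N:ℝ) * ρ) / 4 := by ring
  have fε2 : (N:ℝ) * (β + ρ/4) = (N:ℝ) * β + ((N:ℝ) * ρ) / 4 := by ring
  rw [g1, g2, g3, lt_sub_iff_add_lt, lt_min_iff]
  constructor
  · -- needs 2 W2 + 2δ < WA + WB
    rw [fε2] at f2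
    linarith
  · rw [fε1] at f1
    linarith
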